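/- Let α be a unital partial action of a group G on a unital k-algebra A. Then the map δ_g ⊗ a ↦ α_g(a 1_{g⁻¹}), extended linearly, defines a symmetric partial action of the group algebra kG on A; i.e., it satisfies (PA1) 1·a = a, (PA2) δ_g·(ab) = (δ_g·a)(δ_g·b), (PA3) δ_g·(δ_h·a) = (δ_g·1_A)(δ_{gh}·a), and (PA3') δ_g·(δ_h·a) = (δ_{gh}·a)(δ_g·1_A). -/

import Mathlib

/-- A unital partial action of a group `G` on a unital `k`-algebra `A`:
each domain `A_g = e g * A` is an ideal generated by a central idempotent
`e g`, with `k`-linear unital algebra isomorphisms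
`act g : A_{g⁻¹} → A_g` (encoded as total linear maps, constrained on the
ideals) satisfying the partial action axioms. -/
structure UnitalPartialAction (G : Type*) [Group G] (k : Type*) [CommRing k]
    (A : Type*) [Ring A] [Algebra k A] where
  e : G → A
  act : G → A →ₗ[k] A
  e_idem : ∀ g : G, e g * e g = e g
  e_central : ∀ (g : G) (a : A), e g * a = a * e g
  e_one : e 1 = 1
  act_one : ∀ a : A, act 1 a = a
  mem_act : ∀ (g : G) (a : A), e g⁻¹ * a = a → e g * act g a = act g a
  act_unit : ∀ g : G, act g (e g⁻¹) = e g
  act_mul : ∀ (g : G) (a b : A), e g⁻¹ * a = a → e g⁻¹ * b = b →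
      act g (a * b) = act g a * act g b
  act_inv : ∀ (g : G) (a : A), e g⁻¹ * a = a → act g⁻¹ (act g a) = a
  dom_comp : ∀ (g h : G) (a : A), e h⁻¹ * a = a → e g⁻¹ * act h a = act h a →
      e (g * h)⁻¹ * a = a
  act_comp : ∀ (g h : G) (a : A), e h⁻¹ * a = a → e g⁻¹ * act h a = act h a →
      act g (act h a) = act (g * h) a

variable {G : Type*} [Group G] {k : Type*} [CommRing k]
  {A : Type*} [Ring A] [Algebra k A]

/-- The linear extension of `δ_g ⊗ a ↦ α_g(a 1_{g⁻¹})` to the group algebra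
`kG`. -/
noncomputable def groupAlgAct (α : UnitalPartialAction G k A)
    (f : MonoidAlgebra k G) (a : A) : A :=
  f.coeff.sum fun g c => c • α.act g (α.e g⁻¹ * a)

namespace UnitalPartialAction

variable {G : Type*} [Group G] {k : Type*} [CommRing k]
  {A : Type*} [Ring A] [Algebra k A] (α : UnitalPartialAction G k A)

lemma central_pair (g h : G) (a : A) :
    α.e g * (α.e h * a) = α.e h * (α.e g * a) := by
  rw [← mul_assoc, α.e_central g (α.e h), mul_assoc]

lemma e_mul_e_mul (g : G) (a : A) : α.e g * (α.e g * a) = α.e g * a := by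
  rw [← mul_assoc, α.e_idem]

lemma absorb (g : G) (x : A) : α.e g * (x * α.e g) = x * α.e g := by
  rw [α.e_central g (x * α.e g), mul_assoc, α.e_idem]

lemma two_idem (g h : G) (a : A) :
    (α.e g * α.e h) * (α.e g * a) = (α.e g * α.e h) * a := by
  conv_lhs => rw [mul_assoc]
  rw [α.central_pair h g, α.e_mul_e_mul, ← mul_assoc]

lemma act_inv' (g : G) (a : A) (h : α.e g * a = a) :
    α.act g (α.act g⁻¹ a) = a := by
  have := α.act_inv g⁻¹ a (by rwa [inv_inv])
  rwa [inv_inv] at this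

lemma mem_M (g h : G) (x : A) (h1 : α.e g⁻¹ * x = x) (h2 : α.e h * x = x) :
    α.e (g * h) * α.act g x = α.act g x := by
  set y := α.act h⁻¹ x with hy_def
  have hy : α.e h⁻¹ * y = y := α.mem_act h⁻¹ x (by rwa [inv_inv])
  have hxy : α.act h y = x := α.act_inv' h x h2
  have h2' : α.e g⁻¹ * α.act h y = α.act h y := by rw [hxy]; exact h1
  have hdom : α.e (g * h)⁻¹ * y = y := α.dom_comp g h y hy h2'
  have hcomp : α.act g x = α.act (g * h) y := by
    rw [← hxy]; exact α.act_comp g h y hy h2'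
  rw [hcomp]
  exact α.mem_act (g * h) y hdom

lemma L (g h : G) : α.act g (α.e g⁻¹ * α.e h) = α.e g * α.e (g * h) := by
  set x := α.e g⁻¹ * α.e h with hx
  set u := α.act g x with hu
  set v := α.e g * α.e (g * h) with hv
  have h1 : α.e g⁻¹ * x = x := by rw [hx, ← mul_assoc, α.e_idem]
  have h2 : α.e h * x = x := by rw [hx]; exact α.absorb h (α.e g⁻¹)
  have hgu : α.e g * u = u := α.mem_act g x h1
  have hghu : α.e (g * h) * u = u := α.mem_M g h x h1 h2
  have hvu : v * u = u := by rw [hv, mul_assoc, hghu, hgu]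
  have hv1 : α.e g * v = v := by rw [hv, ← mul_assoc, α.e_idem]
  have hv1' : α.e (g⁻¹)⁻¹ * v = v := by rwa [inv_inv]
  have hv2 : α.e (g * h) * v = v := by rw [hv]; exact α.absorb (g * h) (α.e g)
  have hM := α.mem_M g⁻¹ (g * h) v hv1' hv2
  rw [inv_mul_cancel_left] at hM
  have hgv : α.e g⁻¹ * α.act g⁻¹ v = α.act g⁻¹ v := α.mem_act g⁻¹ v hv1'
  have hxv : x * α.act g⁻¹ v = α.act g⁻¹ v := by
    rw [hx, mul_assoc, hM, hgv]
  have hinv : α.act g (α.act g⁻¹ v) = v := α.act_inv' g v hv1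
  have hmul := α.act_mul g x (α.act g⁻¹ v) h1 hgv
  rw [hxv, hinv] at hmul
  -- hmul : v = u * v
  have hcomm : u * v = v * u := by
    rw [hv, ← mul_assoc, ← α.e_central g, mul_assoc, ← α.e_central (g * h),
      ← mul_assoc]
  show u = v
  calc u = v * u := hvu.symm
    _ = u * v := hcomm.symm
    _ = v := hmul.symm

lemma PA3 (g h : G) (a : A) :
    α.act g (α.e g⁻¹ * α.act h (α.e h⁻¹ * a)) =
      α.e g * α.act (g * h) (α.e (g * h)⁻¹ * a) := by
  set x := α.e h⁻¹ * a with hxdef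
  have hx : α.e h⁻¹ * x = x := by rw [hxdef, ← mul_assoc, α.e_idem]
  have hhx : α.e h * α.act h x = α.act h x := α.mem_act h x hx
  have key : (α.e h * α.e g⁻¹) * α.act h x = α.e g⁻¹ * α.act h x := by
    rw [α.e_central h, mul_assoc, hhx]
  have hmem1 : α.e h⁻¹⁻¹ * (α.e h * α.e g⁻¹) = α.e h * α.e g⁻¹ := by
    rw [inv_inv, ← mul_assoc, α.e_idem]
  have hmem2 : α.e h⁻¹⁻¹ * α.act h x = α.act h x := by rwa [inv_inv]
  have hb : α.act h⁻¹ (α.e g⁻¹ * α.act h x)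
      = α.act h⁻¹ (α.e h * α.e g⁻¹) * α.act h⁻¹ (α.act h x) := by
    rw [← key]; exact α.act_mul h⁻¹ _ _ hmem1 hmem2
  have hinvhx : α.act h⁻¹ (α.act h x) = x := α.act_inv h x hx
  have hL : α.act h⁻¹ (α.e h * α.e g⁻¹) = α.e h⁻¹ * α.e (h⁻¹ * g⁻¹) := by
    have := α.L h⁻¹ g⁻¹
    rwa [inv_inv] at this
  rw [hinvhx, hL] at hb
  set b := α.act h⁻¹ (α.e g⁻¹ * α.act h x) with hbdef
  have hgh : (g * h)⁻¹ = h⁻¹ * g⁻¹ := mul_inv_rev g h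
  have hbform : b = (α.e (g*h)⁻¹ * α.e h⁻¹) * (α.e (g*h)⁻¹ * a) := by
    rw [hgh, hb, hxdef, α.two_idem h⁻¹ (h⁻¹ * g⁻¹) a,
      α.two_idem (h⁻¹ * g⁻¹) h⁻¹ a, α.e_central h⁻¹ (α.e (h⁻¹ * g⁻¹))]
  have hbh : α.e h⁻¹ * b = b := by
    rw [hb, ← mul_assoc (α.e h⁻¹) (α.e h⁻¹ * α.e (h⁻¹ * g⁻¹)) x,
      α.e_mul_e_mul]
  have hbact : α.act h b = α.e g⁻¹ * α.act h x := by
    rw [hbdef]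
    exact α.act_inv' h _ (by rw [← mul_assoc]; exact key)
  have hgb : α.e g⁻¹ * α.act h b = α.act h b := by
    rw [hbact, ← mul_assoc, α.e_idem]
  have hLHS : α.act g (α.e g⁻¹ * α.act h x) = α.act (g * h) b := by
    rw [← hbact]
    exact α.act_comp g h b hbh hgb
  rw [hLHS, hbform]
  have hm1 : α.e (g*h)⁻¹ * (α.e (g*h)⁻¹ * α.e h⁻¹) = α.e (g*h)⁻¹ * α.e h⁻¹ :=
    α.e_mul_e_mul _ _
  have hm2 : α.e (g*h)⁻¹ * (α.e (g*h)⁻¹ * a) = α.e (g*h)⁻¹ * a :=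
    α.e_mul_e_mul _ _
  rw [α.act_mul (g*h) _ _ hm1 hm2]
  have hL2 : α.act (g*h) (α.e (g*h)⁻¹ * α.e h⁻¹) = α.e (g*h) * α.e g := by
    have := α.L (g*h) h⁻¹
    rwa [mul_inv_cancel_right] at this
  rw [hL2]
  have hmemgh : α.e (g*h) * α.act (g*h) (α.e (g*h)⁻¹ * a)
      = α.act (g*h) (α.e (g*h)⁻¹ * a) :=
    α.mem_act (g*h) _ (α.e_mul_e_mul _ _)
  rw [mul_assoc, α.central_pair (g*h) g, hmemgh]

end UnitalPartialAction
/-- A unital partial action of `G` on `A` induces a symmetric partial action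
of the group algebra `kG` on `A`: (PA1) `1·a = a`; (PA2)
`δ_g·(ab) = (δ_g·a)(δ_g·b)`; (PA3) `δ_g·(δ_h·a) = (δ_g·1_A)(δ_{gh}·a)`;
(PA3') `δ_g·(δ_h·a) = (δ_{gh}·a)(δ_g·1_A)`. -/
theorem stmt10 (α : UnitalPartialAction G k A) :
    (∀ (f f' : MonoidAlgebra k G) (a : A),
      groupAlgAct α (f + f') a = groupAlgAct α f a + groupAlgAct α f' a) ∧
    (∀ (c : k) (f : MonoidAlgebra k G) (a : A),
      groupAlgAct α (c • f) a = c • groupAlgAct α f a) ∧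
    (∀ (g : G) (a : A),
      groupAlgAct α (MonoidAlgebra.single g 1) a = α.act g (α.e g⁻¹ * a)) ∧
    (∀ a : A, groupAlgAct α (1 : MonoidAlgebra k G) a = a) ∧
    (∀ (g : G) (a b : A),
      groupAlgAct α (MonoidAlgebra.single g 1) (a * b) =
        groupAlgAct α (MonoidAlgebra.single g 1) a *
          groupAlgAct α (MonoidAlgebra.single g 1) b) ∧
    (∀ (g h : G) (a : A),
      groupAlgAct α (MonoidAlgebra.single g 1)
          (groupAlgAct α (MonoidAlgebra.single h 1) a) =
        groupAlgAct α (MonoidAlgebra.single g 1) (1 : A) *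
          groupAlgAct α (MonoidAlgebra.single (g * h) 1) a) ∧
    (∀ (g h : G) (a : A),
      groupAlgAct α (MonoidAlgebra.single g 1)
          (groupAlgAct α (MonoidAlgebra.single h 1) a) =
        groupAlgAct α (MonoidAlgebra.single (g * h) 1) a *
          groupAlgAct α (MonoidAlgebra.single g 1) (1 : A)) := by
  have hsingle : ∀ (g : G) (a : A),
      groupAlgAct α (MonoidAlgebra.single g 1) a = α.act g (α.e g⁻¹ * a) := by
    intro g a
    unfold groupAlgAct
    rw [MonoidAlgebra.coeff_single, Finsupp.sum_single_index (by simp), one_smul]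
  have hmul : ∀ (g : G) (a b : A),
      (α.e g * a) * (α.e g * b) = α.e g * (a * b) := by
    intro g a b
    calc (α.e g * a) * (α.e g * b) = α.e g * (a * (α.e g * b)) := by
          rw [mul_assoc]
      _ = α.e g * (α.e g * (a * b)) := by
          rw [← mul_assoc a, ← α.e_central, mul_assoc]
      _ = α.e g * (a * b) := α.e_mul_e_mul _ _
  refine ⟨?_, ?_, hsingle, ?_, ?_, ?_, ?_⟩
  · intro f f' a
    exact Finsupp.sum_add_index' (fun g => zero_smul k _)
      (fun g c1 c2 => add_smul c1 c2 _)
  · intro c f a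
    unfold groupAlgAct
    rw [MonoidAlgebra.coeff_smul, Finsupp.sum_smul_index (h := fun g d => d • α.act g (α.e g⁻¹ * a))
      (fun i => zero_smul k _), Finsupp.smul_sum]
    simp only [mul_smul]
  · intro a
    rw [show (1 : MonoidAlgebra k G) = MonoidAlgebra.single 1 1 from rfl,
      hsingle, inv_one, α.e_one, one_mul, α.act_one]
  · intro g a b
    rw [hsingle, hsingle, hsingle, ← hmul, α.act_mul g _ _
      (α.e_mul_e_mul _ _) (α.e_mul_e_mul _ _)]
  · intro g h a
    rw [hsingle, hsingle, hsingle, hsingle, mul_one, α.act_unit]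
    exact α.PA3 g h a
  · intro g h a
    rw [hsingle, hsingle, hsingle, hsingle, mul_one, α.act_unit,
      ← α.e_central g]
    exact α.PA3 g h a
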